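/- For each n, let Z_{n1},…,Z_{nn} be independent and identically distributed random vectors (with distribution possibly depending on n) whose support is contained in ℕ^p, and suppose E[‖Z_{n1}‖^{2p}] < C₀ < ∞ with C₀ independent of n. Let S_n be the number of distinct values among Z_{n1},…,Z_{nn}. Then S_n / n → 0 almost surely as n → ∞. -/

import Mathlib

set_option maxHeartbeats 1000000

open MeasureTheory ProbabilityTheory Filter
open scoped Classical ENNReal

section stmt2aux

lemma stmt2_count_le {n p r : ℕ} (f : Fin n → Fin p → ℕ) :
    (Finset.univ.image f).card ≤ r ^ p +
      (Finset.univ.filter (fun i => ∃ j, r ≤ f i j)).card := by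
  classical
  have hsub : Finset.univ.image f ⊆
      ((Finset.univ.filter (fun i => ¬ ∃ j, r ≤ f i j)).image f) ∪
        ((Finset.univ.filter (fun i => ∃ j, r ≤ f i j)).image f) := by
    intro v hv
    rw [Finset.mem_image] at hv
    obtain ⟨i, _, rfl⟩ := hv
    by_cases h : ∃ j, r ≤ f i j
    · exact Finset.mem_union_right _ (Finset.mem_image_of_mem f (by simp [h]))
    · exact Finset.mem_union_left _ (Finset.mem_image_of_mem f (by simp only [Finset.mem_filter, Finset.mem_univ, true_and]; exact h))
  calc (Finset.univ.image f).card
      ≤ (((Finset.univ.filter (fun i => ¬ ∃ j, r ≤ f i j)).image f) ∪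
        ((Finset.univ.filter (fun i => ∃ j, r ≤ f i j)).image f)).card :=
        Finset.card_le_card hsub
    _ ≤ ((Finset.univ.filter (fun i => ¬ ∃ j, r ≤ f i j)).image f).card +
        ((Finset.univ.filter (fun i => ∃ j, r ≤ f i j)).image f).card :=
        Finset.card_union_le _ _
    _ ≤ r ^ p + (Finset.univ.filter (fun i => ∃ j, r ≤ f i j)).card := by
        gcongr
        · calc ((Finset.univ.filter (fun i => ¬ ∃ j, r ≤ f i j)).image f).card
              ≤ (Fintype.piFinset (fun _ : Fin p => Finset.range r)).card := by
                apply Finset.card_le_card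
                intro v hv
                rw [Finset.mem_image] at hv
                obtain ⟨i, hi, rfl⟩ := hv
                rw [Finset.mem_filter] at hi
                rw [Fintype.mem_piFinset]
                intro j
                rw [Finset.mem_range]
                by_contra h
                exact hi.2 ⟨j, Nat.le_of_not_lt h⟩
            _ = r ^ p := by
                rw [Fintype.card_piFinset]
                simp
        · exact Finset.card_image_le

lemma stmt2_tendsto_zero (f : ℕ → ℝ) (h0 : ∀ n, 0 ≤ f n)
    (h : ∀ k : ℕ, ∀ᶠ n in atTop, f n ≤ 1 / ((k : ℝ) + 1)) :
    Tendsto f atTop (nhds 0) := by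
  rw [Metric.tendsto_atTop]
  intro ε hε
  obtain ⟨k, hk⟩ := exists_nat_one_div_lt hε
  have hk' := h k
  rw [eventually_atTop] at hk'
  obtain ⟨N, hN⟩ := hk'
  exact ⟨N, fun n hn => by
    rw [Real.dist_eq, sub_zero, abs_of_nonneg (h0 n)]
    exact lt_of_le_of_lt (hN n hn) hk⟩


lemma stmt2_r_big (p n : ℕ) (hp : 0 < p) :
    n ≤ (⌈(n : ℝ) ^ (1 / (2 * (p : ℝ)))⌉₊) ^ (2 * p) := by
  have hpos : (0 : ℝ) < 2 * (p : ℝ) := by positivity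
  have h1 : ((n : ℝ)) ^ (1 / (2 * (p : ℝ))) ≤ (⌈(n : ℝ) ^ (1 / (2 * (p : ℝ)))⌉₊ : ℝ) :=
    Nat.le_ceil _
  have h2 : ((n : ℝ)) = (((n : ℝ)) ^ (1 / (2 * (p : ℝ)))) ^ (2 * p : ℕ) := by
    rw [← Real.rpow_natCast (((n : ℝ)) ^ (1 / (2 * (p : ℝ)))) (2 * p),
      ← Real.rpow_mul (Nat.cast_nonneg n)]
    rw [show (1 / (2 * (p : ℝ))) * ((2 * p : ℕ) : ℝ) = 1 by push_cast; field_simp]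
    rw [Real.rpow_one]
  have h3 : (n : ℝ) ≤ ((⌈(n : ℝ) ^ (1 / (2 * (p : ℝ)))⌉₊ : ℝ)) ^ (2 * p) :=
    h2.le.trans (pow_le_pow_left₀ (Real.rpow_nonneg (Nat.cast_nonneg n) _) h1 _)
  exact_mod_cast h3

lemma stmt2_r_small (p n : ℕ) (hp : 0 < p) (hn : 1 ≤ n) :
    ((⌈(n : ℝ) ^ (1 / (2 * (p : ℝ)))⌉₊ : ℝ)) ^ p ≤ 2 ^ p * (n : ℝ) ^ ((1 : ℝ) / 2) := by
  have hn1 : (1 : ℝ) ≤ (n : ℝ) := by exact_mod_cast hn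
  have ha : (0 : ℝ) ≤ 1 / (2 * (p : ℝ)) := by positivity
  have h1 : (1 : ℝ) ≤ ((n : ℝ)) ^ (1 / (2 * (p : ℝ))) := Real.one_le_rpow hn1 ha
  have h2 : ((⌈(n : ℝ) ^ (1 / (2 * (p : ℝ)))⌉₊ : ℝ)) ≤ 2 * ((n : ℝ)) ^ (1 / (2 * (p : ℝ))) := by
    have h3 := Nat.ceil_lt_add_one (by positivity : (0 : ℝ) ≤ ((n : ℝ)) ^ (1 / (2 * (p : ℝ))))
    linarith
  calc ((⌈(n : ℝ) ^ (1 / (2 * (p : ℝ)))⌉₊ : ℝ)) ^ p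
      ≤ (2 * ((n : ℝ)) ^ (1 / (2 * (p : ℝ)))) ^ p := pow_le_pow_left₀ (Nat.cast_nonneg _) h2 p
    _ = 2 ^ p * (((n : ℝ)) ^ (1 / (2 * (p : ℝ)))) ^ p := mul_pow _ _ _
    _ = 2 ^ p * (n : ℝ) ^ ((1 : ℝ) / 2) := by
        rw [← Real.rpow_natCast (((n : ℝ)) ^ (1 / (2 * (p : ℝ)))) p,
          ← Real.rpow_mul (Nat.cast_nonneg n)]
        congr 1
        congr 1
        have : (p : ℝ) ≠ 0 := by positivity
        field_simp

lemma stmt2_markov {Ω : Type*} [MeasurableSpace Ω] (μ : Measure Ω) (p : ℕ)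
    (f : Ω → Fin p → ℕ) (hf : Measurable f) (C₀ : ℝ)
    (hmom : ∫⁻ ω, ENNReal.ofReal ((∑ j, ((f ω j : ℝ)) ^ 2) ^ p) ∂μ ≤ ENNReal.ofReal C₀)
    (r : ℕ) :
    ((r : ℝ≥0∞)) ^ (2 * p) * μ {ω | ∃ j, r ≤ f ω j} ≤ ENNReal.ofReal C₀ := by
  have hmf : Measurable fun ω => ENNReal.ofReal ((∑ j, ((f ω j : ℝ)) ^ 2) ^ p) :=
    (measurable_of_countable fun v : Fin p → ℕ =>
      ENNReal.ofReal ((∑ j, ((v j : ℝ)) ^ 2) ^ p)).comp hf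
  have hsub : {ω | ∃ j, r ≤ f ω j} ⊆
      {ω | ((r : ℝ≥0∞)) ^ (2 * p) ≤ ENNReal.ofReal ((∑ j, ((f ω j : ℝ)) ^ 2) ^ p)} := by
    rintro ω ⟨j, hj⟩
    have h1 : ((r : ℝ)) ^ (2 * p) ≤ (∑ j', ((f ω j' : ℝ)) ^ 2) ^ p := by
      have hle : ((r : ℝ)) ^ 2 ≤ ((f ω j : ℝ)) ^ 2 := by
        have : (r : ℝ) ≤ (f ω j : ℝ) := by exact_mod_cast hj
        exact pow_le_pow_left₀ (Nat.cast_nonneg _) this 2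
      have hsum : ((f ω j : ℝ)) ^ 2 ≤ ∑ j', ((f ω j' : ℝ)) ^ 2 :=
        Finset.single_le_sum (f := fun j' => ((f ω j' : ℝ)) ^ 2)
          (fun j' _ => sq_nonneg _) (Finset.mem_univ j)
      calc ((r : ℝ)) ^ (2 * p) = (((r : ℝ)) ^ 2) ^ p := by rw [← pow_mul]
        _ ≤ (∑ j', ((f ω j' : ℝ)) ^ 2) ^ p :=
            pow_le_pow_left₀ (sq_nonneg _) (hle.trans hsum) p
    show ((r : ℝ≥0∞)) ^ (2 * p) ≤ _
    calc ((r : ℝ≥0∞)) ^ (2 * p) = ENNReal.ofReal (((r : ℝ)) ^ (2 * p)) := by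
          rw [ENNReal.ofReal_pow (Nat.cast_nonneg _), ENNReal.ofReal_natCast]
      _ ≤ _ := ENNReal.ofReal_le_ofReal h1
  calc ((r : ℝ≥0∞)) ^ (2 * p) * μ {ω | ∃ j, r ≤ f ω j}
      ≤ ((r : ℝ≥0∞)) ^ (2 * p) *
        μ {ω | ((r : ℝ≥0∞)) ^ (2 * p) ≤ ENNReal.ofReal ((∑ j, ((f ω j : ℝ)) ^ 2) ^ p)} :=
        mul_le_mul_right (measure_mono hsub) _
    _ ≤ ∫⁻ ω, ENNReal.ofReal ((∑ j, ((f ω j : ℝ)) ^ 2) ^ p) ∂μ :=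
        mul_meas_ge_le_lintegral₀ hmf.aemeasurable _
    _ ≤ ENNReal.ofReal C₀ := hmom

lemma stmt2_sq_int {Ω : Type*} [MeasurableSpace Ω] (μ : Measure Ω) {n : ℕ}
    (A : Fin n → Set Ω) (hA : ∀ i, MeasurableSet (A i))
    (hind : ∀ i i' : Fin n, i ≠ i' → μ (A i ∩ A i') = μ (A i) * μ (A i'))
    (q : ℝ≥0∞) (hq : ∀ i, μ (A i) ≤ q) :
    ∫⁻ ω, (∑ i : Fin n, Set.indicator (A i) (fun _ => (1 : ℝ≥0∞)) ω) ^ 2 ∂μ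
      ≤ (n : ℝ≥0∞) * q + ((n : ℝ≥0∞) * q) ^ 2 := by
  classical
  have hsq : ∀ ω : Ω, (∑ i : Fin n, Set.indicator (A i) (fun _ => (1 : ℝ≥0∞)) ω) ^ 2 =
      ∑ i : Fin n, ∑ i' : Fin n,
        Set.indicator (A i ∩ A i') (fun _ => (1 : ℝ≥0∞)) ω := by
    intro ω
    rw [sq, Finset.sum_mul_sum]
    congr 1
    funext i
    congr 1
    funext i'
    rw [← Set.inter_indicator_mul]
    simp
  calc ∫⁻ ω, (∑ i : Fin n, Set.indicator (A i) (fun _ => (1 : ℝ≥0∞)) ω) ^ 2 ∂μ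
      = ∑ i : Fin n, ∑ i' : Fin n, μ (A i ∩ A i') := by
        simp_rw [hsq]
        rw [lintegral_finset_sum]
        · congr 1
          funext i
          rw [lintegral_finset_sum]
          · congr 1
            funext i'
            rw [lintegral_indicator ((hA i).inter (hA i'))]
            simp
          · exact fun i' _ => (measurable_one.indicator ((hA i).inter (hA i')))
        · exact fun i _ => Finset.measurable_sum _
            (fun i' _ => (measurable_one.indicator ((hA i).inter (hA i'))))
    _ ≤ ∑ i : Fin n, ∑ i' : Fin n, ((if i = i' then q else 0) + q * q) := by
        apply Finset.sum_le_sum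
        intro i _
        apply Finset.sum_le_sum
        intro i' _
        by_cases h : i = i'
        · subst h
          simp only [if_pos rfl]
          exact le_add_right ((measure_mono Set.inter_subset_left).trans (hq i))
        · simp only [if_neg h, zero_add]
          rw [hind i i' h]
          exact mul_le_mul' (hq i) (hq i')
    _ = (n : ℝ≥0∞) * q + ((n : ℝ≥0∞) * q) ^ 2 := by
        simp_rw [Finset.sum_add_distrib, Finset.sum_ite_eq, Finset.mem_univ, if_pos]
        simp [Finset.sum_const, mul_pow, sq]
        ring

end stmt2aux

/-- **Negligible number of distinct values** (Statement 2, Lemma 1 of the paper).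
For each `n`, let `Z_{n1},…,Z_{nn}` be i.i.d. random vectors (distribution possibly depending
on `n`) supported in `ℕ^p` with `E[‖Z_{n1}‖^{2p}] < C₀ < ∞` uniformly in `n` (here
`‖z‖^{2p} = (Σ_j z_j²)^p` is the `2p`-th power of the Euclidean norm).  If `S_n` denotes the
number of distinct values among `Z_{n1},…,Z_{nn}`, then `S_n/n → 0` almost surely. -/
theorem stmt2 {Ω : Type*} [MeasurableSpace Ω] (μ : Measure Ω) [IsProbabilityMeasure μ]
    (p : ℕ) (Z : (n : ℕ) → Fin n → Ω → Fin p → ℕ)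
    (hmeas : ∀ n i, Measurable (Z n i))
    (hindep : ∀ n, iIndepFun (Z n) μ)
    (hident : ∀ n, ∀ i j : Fin n, Measure.map (Z n i) μ = Measure.map (Z n j) μ)
    (C₀ : ℝ)
    (hmom : ∀ n (i : Fin n),
      ∫⁻ ω, ENNReal.ofReal ((∑ j, ((Z n i ω j : ℝ)) ^ 2) ^ p) ∂μ < ENNReal.ofReal C₀) :
    ∀ᵐ ω ∂μ, Tendsto
      (fun n => (((Finset.univ.image (fun i : Fin n => Z n i ω)).card : ℝ)) / (n : ℝ))
      atTop (nhds 0) := by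
  rcases Nat.eq_zero_or_pos p with hp | hp
  · -- p = 0 : the codomain is a subsingleton, so there is at most one distinct value
    subst hp
    refine Filter.Eventually.of_forall fun ω => ?_
    have hle : ∀ n : ℕ,
        ((Finset.univ.image (fun i : Fin n => Z n i ω)).card : ℝ) / n ≤ 1 / n := by
      intro n
      gcongr
      exact_mod_cast Finset.card_le_one.2 fun a _ b _ => Subsingleton.elim a b
    refine squeeze_zero (fun n => by positivity) hle tendsto_one_div_atTop_nhds_zero_nat
  · -- main case p ≥ 1
    set C : ℝ≥0∞ := ENNReal.ofReal C₀ with hCdef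
    have hCne : C ≠ ∞ := ENNReal.ofReal_ne_top
    set r : ℕ → ℕ := fun n => ⌈(n : ℝ) ^ (1 / (2 * (p : ℝ)))⌉₊ with hrdef
    set A : (n : ℕ) → Fin n → Set Ω := fun n i => {ω | ∃ j, r n ≤ Z n i ω j} with hAdef
    set Nc : (n : ℕ) → Ω → ℕ :=
      fun n ω => (Finset.univ.filter (fun i : Fin n => ω ∈ A n i)).card with hNcdef
    have hAmeas : ∀ n i, MeasurableSet (A n i) := fun n i =>
      (hmeas n i) ((Set.to_countable {v : Fin p → ℕ | ∃ j, r n ≤ v j}).measurableSet)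
    have hNeq : ∀ (n : ℕ) (ω : Ω), ((Nc n ω : ℝ≥0∞)) =
        ∑ i : Fin n, Set.indicator (A n i) (fun _ => (1 : ℝ≥0∞)) ω := by
      intro n ω
      simp only [hNcdef]
      rw [Finset.card_filter]
      push_cast
      simp [Set.indicator_apply]
    -- individual bad-set probability bound
    have hq : ∀ n : ℕ, 1 ≤ n → ∀ i : Fin n, μ (A n i) ≤ C / n := by
      intro n hn i
      have key := stmt2_markov μ p (Z n i) (hmeas n i) C₀ (hmom n i).le (r n)
      have hnr : (n : ℝ≥0∞) ≤ ((r n : ℝ≥0∞)) ^ (2 * p) := by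
        have hbig : n ≤ r n ^ (2 * p) := by
          show n ≤ (⌈(n : ℝ) ^ (1 / (2 * (p : ℝ)))⌉₊) ^ (2 * p)
          exact stmt2_r_big p n hp
        have h2 : ((n : ℕ) : ℝ≥0∞) ≤ (((r n) ^ (2 * p) : ℕ) : ℝ≥0∞) := by exact_mod_cast hbig
        push_cast at h2
        exact h2
      rw [ENNReal.le_div_iff_mul_le (Or.inl (Nat.cast_ne_zero.2 (by omega)))
        (Or.inl (ENNReal.natCast_ne_top n))]
      calc μ (A n i) * n ≤ μ (A n i) * ((r n : ℝ≥0∞)) ^ (2 * p) := mul_le_mul_right hnr _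
        _ = ((r n : ℝ≥0∞)) ^ (2 * p) * μ (A n i) := mul_comm _ _
        _ ≤ C := key
    -- pairwise independence of bad sets
    have hind : ∀ n (i i' : Fin n), i ≠ i' → μ (A n i ∩ A n i') = μ (A n i) * μ (A n i') := by
      intro n i i' hne
      have hB : MeasurableSet {v : Fin p → ℕ | ∃ j, r n ≤ v j} :=
        (Set.to_countable _).measurableSet
      exact ((hindep n).indepFun hne).measure_inter_preimage_eq_mul _ _ hB hB
    -- second moment bound
    have hN2 : ∀ n : ℕ, 1 ≤ n →
        ∫⁻ ω, ((Nc n ω : ℝ≥0∞)) ^ 2 ∂μ ≤ C + C ^ 2 := by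
      intro n hn
      have h := stmt2_sq_int μ (A n) (hAmeas n) (hind n) (C / n) (hq n hn)
      have hc : (n : ℝ≥0∞) * (C / n) = C := by
        rw [mul_comm]
        exact ENNReal.div_mul_cancel (Nat.cast_ne_zero.2 (by omega)) (ENNReal.natCast_ne_top n)
      rw [hc] at h
      refine le_trans (le_of_eq ?_) h
      apply lintegral_congr
      intro ω
      rw [hNeq n ω]
    -- Borel-Cantelli for each k
    have hBC : ∀ k : ℕ, ∀ᵐ ω ∂μ, ∀ᶠ n in atTop, (k + 1) * Nc n ω < n := by
      intro k
      set s : ℕ → Set Ω := fun m =>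
        {ω | (((m + 1 : ℕ) : ℝ≥0∞)) ^ 2 ≤ (((k + 1 : ℕ) : ℝ≥0∞)) ^ 2 * ((Nc (m + 1) ω : ℝ≥0∞)) ^ 2}
        with hsdef
      have hNmeas : ∀ n : ℕ, Measurable fun ω => ((Nc n ω : ℝ≥0∞)) := by
        intro n
        rw [show (fun ω => ((Nc n ω : ℝ≥0∞))) =
            fun ω => ∑ i : Fin n, Set.indicator (A n i) (fun _ => (1 : ℝ≥0∞)) ω
          from funext fun ω => hNeq n ω]
        exact Finset.measurable_sum _ fun i _ => measurable_const.indicator (hAmeas n i)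
      have hμs : ∀ m : ℕ, μ (s m) ≤
          ((((k + 1 : ℕ) : ℝ≥0∞)) ^ 2 * (C + C ^ 2)) / (((m + 1 : ℕ) : ℝ≥0∞)) ^ 2 := by
        intro m
        have hfm : Measurable fun ω =>
            (((k + 1 : ℕ) : ℝ≥0∞)) ^ 2 * ((Nc (m + 1) ω : ℝ≥0∞)) ^ 2 :=
          (measurable_const.mul ((hNmeas (m + 1)).pow_const 2))
        have key : (((m + 1 : ℕ) : ℝ≥0∞)) ^ 2 * μ (s m) ≤
            (((k + 1 : ℕ) : ℝ≥0∞)) ^ 2 * (C + C ^ 2) := by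
          calc (((m + 1 : ℕ) : ℝ≥0∞)) ^ 2 * μ (s m)
              ≤ ∫⁻ ω, (((k + 1 : ℕ) : ℝ≥0∞)) ^ 2 * ((Nc (m + 1) ω : ℝ≥0∞)) ^ 2 ∂μ :=
                mul_meas_ge_le_lintegral₀ hfm.aemeasurable _
            _ = (((k + 1 : ℕ) : ℝ≥0∞)) ^ 2 * ∫⁻ ω, ((Nc (m + 1) ω : ℝ≥0∞)) ^ 2 ∂μ :=
                lintegral_const_mul _ ((hNmeas (m + 1)).pow_const 2)
            _ ≤ (((k + 1 : ℕ) : ℝ≥0∞)) ^ 2 * (C + C ^ 2) :=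
                mul_le_mul_right (hN2 (m + 1) (by omega)) _
        rw [ENNReal.le_div_iff_mul_le
          (Or.inl (pow_ne_zero _ (Nat.cast_ne_zero.2 (by omega))))
          (Or.inl (ENNReal.pow_ne_top (ENNReal.natCast_ne_top (m+1))))]
        calc μ (s m) * (((m + 1 : ℕ) : ℝ≥0∞)) ^ 2
            = (((m + 1 : ℕ) : ℝ≥0∞)) ^ 2 * μ (s m) := mul_comm _ _
          _ ≤ _ := key
      have hsum : (∑' m, μ (s m)) ≠ ∞ := by
        set K : ℝ≥0∞ := (((k + 1 : ℕ) : ℝ≥0∞)) ^ 2 * (C + C ^ 2) with hKdef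
        have hKne : K ≠ ∞ :=
          ENNReal.mul_ne_top (ENNReal.pow_ne_top (ENNReal.natCast_ne_top _))
            (ENNReal.add_ne_top.2 ⟨hCne, ENNReal.pow_ne_top hCne⟩)
        have hle : ∀ m : ℕ, μ (s m) ≤ K * ((((m + 1 : ℕ) : ℝ≥0∞)) ^ 2)⁻¹ := by
          intro m
          have h := hμs m
          rwa [div_eq_mul_inv] at h
        have hsummable : Summable (fun m : ℕ => 1 / (((m + 1 : ℕ) : ℝ)) ^ 2) := by
          have h1 : Summable (fun m : ℕ => 1 / ((m : ℝ)) ^ 2) :=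
            Real.summable_one_div_nat_pow.2 one_lt_two
          exact (summable_nat_add_iff (f := fun n : ℕ => 1 / ((n : ℝ)) ^ 2) 1).2 h1
        have h2 : (∑' m : ℕ, K * ((((m + 1 : ℕ) : ℝ≥0∞)) ^ 2)⁻¹) ≠ ∞ := by
          rw [ENNReal.tsum_mul_left]
          refine ENNReal.mul_ne_top hKne ?_
          have heq : ∀ m : ℕ, ((((m + 1 : ℕ) : ℝ≥0∞)) ^ 2)⁻¹ =
              ENNReal.ofReal (1 / (((m + 1 : ℕ) : ℝ)) ^ 2) := by
            intro m
            rw [← ENNReal.ofReal_natCast, ← ENNReal.ofReal_pow (by positivity),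
              ← ENNReal.ofReal_inv_of_pos (by positivity), one_div]
          simp_rw [heq]
          rw [← ENNReal.ofReal_tsum_of_nonneg (fun m => by positivity) hsummable]
          exact ENNReal.ofReal_ne_top
        exact ne_top_of_le_ne_top h2 (ENNReal.tsum_le_tsum hle)
      have hae := ae_eventually_notMem hsum
      filter_upwards [hae] with ω hω
      rw [eventually_atTop] at hω ⊢
      obtain ⟨M, hM⟩ := hω
      refine ⟨M + 1, fun n hn => ?_⟩
      obtain ⟨m, rfl⟩ : ∃ m, n = m + 1 := ⟨n - 1, by omega⟩
      have h2 := hM m (by omega)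
      rw [hsdef] at h2
      simp only [Set.mem_setOf_eq, not_le] at h2
      have h3 : ((k + 1) * Nc (m + 1) ω) ^ 2 < (m + 1) ^ 2 := by
        have : ((((k + 1 : ℕ) : ℝ≥0∞)) ^ 2 * ((Nc (m + 1) ω : ℝ≥0∞)) ^ 2) =
            ((((k + 1) * Nc (m + 1) ω) ^ 2 : ℕ) : ℝ≥0∞) := by push_cast; ring
        rw [this] at h2
        exact_mod_cast h2
      by_contra hcon
      push_neg at hcon
      exact absurd (Nat.pow_le_pow_left hcon 2) (not_le.2 h3)
    -- combine over k and conclude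
    have hae : ∀ᵐ ω ∂μ, ∀ k : ℕ, ∀ᶠ n in atTop, (k + 1) * Nc n ω < n :=
      (MeasureTheory.ae_all_iff).2 hBC
    filter_upwards [hae] with ω hω
    have hbound : ∀ n : ℕ,
        ((Finset.univ.image (fun i : Fin n => Z n i ω)).card : ℝ) / n ≤
          ((r n : ℝ) ^ p) / n + (Nc n ω : ℝ) / n := by
      intro n
      rw [← add_div]
      gcongr
      have h := stmt2_count_le (r := r n) (fun i : Fin n => Z n i ω)
      have h2 : (Finset.univ.filter (fun i : Fin n => ∃ j, r n ≤ Z n i ω j)).card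
          = Nc n ω := rfl
      rw [h2] at h
      exact_mod_cast h
    have T1 : Tendsto (fun n : ℕ => ((r n : ℝ) ^ p) / n) atTop (nhds 0) := by
      refine squeeze_zero' (g := fun n : ℕ => (2:ℝ) ^ p * (n : ℝ) ^ (-(1/2) : ℝ))
        (Filter.Eventually.of_forall fun n => by positivity) ?_ ?_
      · rw [eventually_atTop]
        refine ⟨1, fun n hn => ?_⟩
        have hn0 : (0 : ℝ) < n := by exact_mod_cast hn
        have h := stmt2_r_small p n hp hn
        have heq : (2 : ℝ) ^ p * (n : ℝ) ^ (-(1 / 2) : ℝ) =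
            (2 ^ p * (n : ℝ) ^ ((1 : ℝ) / 2)) / n := by
          rw [show (-(1 / 2) : ℝ) = 1 / 2 - 1 by norm_num, Real.rpow_sub hn0, Real.rpow_one]
          ring
        show ((r n : ℝ)) ^ p / n ≤ (2:ℝ) ^ p * (n : ℝ) ^ (-(1/2) : ℝ)
        rw [heq]
        gcongr
      · have h := ((tendsto_rpow_neg_atTop (by norm_num : (0:ℝ) < 1/2)).comp
          tendsto_natCast_atTop_atTop).const_mul ((2:ℝ) ^ p)
        simpa using h
    have T2 : Tendsto (fun n : ℕ => (Nc n ω : ℝ) / n) atTop (nhds 0) := by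
      refine stmt2_tendsto_zero _ (fun n => by positivity) fun k => ?_
      filter_upwards [hω k] with n hn
      have hn1 : 0 < n := by omega
      have hn0 : (0 : ℝ) < n := by exact_mod_cast hn1
      rw [div_le_div_iff₀ hn0 (by positivity)]
      have : (k + 1) * Nc n ω ≤ n := hn.le
      have hcast : ((k + 1) * Nc n ω : ℝ) ≤ n := by exact_mod_cast this
      push_cast at hcast
      linarith [hcast]
    have := T1.add T2
    rw [add_zero] at this
    exact squeeze_zero' (Filter.Eventually.of_forall fun n => by positivity)
      (Filter.Eventually.of_forall hbound) this
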